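/- Let X be an abelian surface (so ε = 0, and (x,x) < 0 for 0 ≠ x ∈ H^⊥ ∩ NS_ℝ). Let v be a Mukai vector with ⟨v²⟩ > 0 and d_β(v) ≥ 0, and v₁ ∉ ℚv with v₂ := v − v₁. Suppose Z_{(β,ω)}(v₁) and Z_{(β,ω)}(v₂) are ℝ-linearly dependent with both in the semi-closed upper half plane ℍ ∪ ℝ_{<0}. Then ⟨v₁²⟩ ≥ 0 and ⟨v₂²⟩ ≥ 0 imply ⟨v₁,v₂⟩ > 0. (Numerical wall criterion, direction (I) of the Proposition.) -/

import Mathlib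

variable {N : Type*} [AddCommGroup N] [Module ℚ N]

/-- The Mukai pairing on the rational Mukai lattice `Λ_ℚ = ℚ × N × ℚ`,
`⟨x,y⟩ = (x₁,y₁) − x₀y₂ − x₂y₀`. -/
def mpair (B : N →ₗ[ℚ] N →ₗ[ℚ] ℚ) (x y : ℚ × N × ℚ) : ℚ :=
  B x.2.1 y.2.1 - x.1 * y.2.2 - x.2.2 * y.1

/-- `e^β = (1, β, (β,β)/2)`. -/
def mexp (B : N →ₗ[ℚ] N →ₗ[ℚ] ℚ) (β : N) : ℚ × N × ℚ :=
  (1, β, B β β / 2)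

/-- The fundamental class `ϱ`. -/
def mrho : ℚ × N × ℚ := (0, 0, 1)

/-- `r_β(v) = −⟨v,ϱ⟩`. -/
def rInv (B : N →ₗ[ℚ] N →ₗ[ℚ] ℚ) (v : ℚ × N × ℚ) : ℚ :=
  -(mpair B v mrho)

/-- `a_β(v) = −⟨v, e^β⟩`. -/
def aInv (B : N →ₗ[ℚ] N →ₗ[ℚ] ℚ) (β : N) (v : ℚ × N × ℚ) : ℚ :=
  -(mpair B v (mexp B β))

/-- `d_β(v) = ⟨v, H + (H,β)ϱ⟩ / (H,H)`. -/
def dInv (B : N →ₗ[ℚ] N →ₗ[ℚ] ℚ) (H β : N) (v : ℚ × N × ℚ) : ℚ :=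
  mpair B v (0, H, B H β) / B H H

/-- `D_β(v)`, the `H`-orthogonal part of the `NS`-component of `v`. -/
def DInv (B : N →ₗ[ℚ] N →ₗ[ℚ] ℚ) (H β : N) (v : ℚ × N × ℚ) : N :=
  v.2.1 - rInv B v • β - dInv B H β v • H

/-- The stability function `Z_{(β,ω)}(v) = ⟨e^{β+iω}, v⟩` with `ω = t•H`,
expanded as `⟨e^β,v⟩ + i⟨ω + (ω,β)ϱ, v⟩ − ((ω,ω)/2)⟨ϱ,v⟩`. -/
noncomputable def Zst (B : N →ₗ[ℚ] N →ₗ[ℚ] ℚ) (H β : N) (t : ℚ)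
    (v : ℚ × N × ℚ) : ℂ :=
  ((mpair B (mexp B β) v : ℚ) : ℂ)
    + ((mpair B (0, t • H, B (t • H) β) v : ℚ) : ℂ) * Complex.I
    - ((B (t • H) (t • H) / 2 : ℚ) : ℂ) * ((mpair B mrho v : ℚ) : ℂ)


section auxWall
variable (B : N →ₗ[ℚ] N →ₗ[ℚ] ℚ) (H β : N) (t : ℚ)

lemma mpair_sub_sub (hB : ∀ a b : N, B a b = B b a) (p q : ℚ) (x y : ℚ × N × ℚ) :
    mpair B (p • x - q • y) (p • x - q • y)
      = p^2 * mpair B x x - 2*(p*q)*mpair B x y + q^2 * mpair B y y := by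
  simp only [mpair, Prod.fst_sub, Prod.snd_sub, Prod.smul_fst, Prod.smul_snd,
    map_sub, map_smul, LinearMap.sub_apply, LinearMap.smul_apply, smul_eq_mul]
  rw [hB y.2.1 x.2.1]; ring

lemma mpair_add_add (hB : ∀ a b : N, B a b = B b a) (x y : ℚ × N × ℚ) :
    mpair B (x + y) (x + y)
      = mpair B x x + 2*mpair B x y + mpair B y y := by
  simp only [mpair, Prod.fst_add, Prod.snd_add, map_add, LinearMap.add_apply]
  rw [hB y.2.1 x.2.1]; ring

lemma DInv_orth (hB : ∀ a b : N, B a b = B b a) (hH : B H H ≠ 0) (u : ℚ × N × ℚ) :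
    B (DInv B H β u) H = 0 := by
  simp only [DInv, dInv, rInv, mpair, mrho, mexp, map_sub, map_smul, map_zero,
    LinearMap.sub_apply, LinearMap.smul_apply, LinearMap.zero_apply, smul_eq_mul,
    mul_zero, mul_one, zero_mul, sub_zero]
  rw [hB β H]
  field_simp
  ring

lemma mpair_formula (hB : ∀ a b : N, B a b = B b a) (hH : B H H ≠ 0) (u w : ℚ × N × ℚ) :
    mpair B u w = B (DInv B H β u) (DInv B H β w)
      + dInv B H β u * dInv B H β w * B H H
      - u.1 * aInv B β w - w.1 * aInv B β u := by
  simp only [DInv, dInv, aInv, rInv, mpair, mexp, mrho, map_sub, map_smul, map_zero,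
    LinearMap.sub_apply, LinearMap.smul_apply, LinearMap.zero_apply, smul_eq_mul,
    mul_zero, mul_one, zero_mul, one_mul, sub_zero, zero_sub, neg_neg, neg_sub]
  rw [hB β H]
  field_simp
  rw [hB H w.2.1, hB β w.2.1]
  ring

lemma aInv_sub_smul (p q : ℚ) (x y : ℚ × N × ℚ) :
    aInv B β (p • x - q • y) = p * aInv B β x - q * aInv B β y := by
  simp only [aInv, mpair, mexp, Prod.fst_sub, Prod.snd_sub, Prod.smul_fst, Prod.smul_snd,
    map_sub, map_smul, LinearMap.sub_apply, LinearMap.smul_apply, smul_eq_mul]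
  ring

lemma dInv_sub_smul (p q : ℚ) (x y : ℚ × N × ℚ) :
    dInv B H β (p • x - q • y) = p * dInv B H β x - q * dInv B H β y := by
  simp only [dInv, mpair, Prod.fst_sub, Prod.snd_sub, Prod.smul_fst, Prod.smul_snd,
    map_sub, map_smul, LinearMap.sub_apply, LinearMap.smul_apply, smul_eq_mul]
  ring

lemma fst_sub_smul (p q : ℚ) (x y : ℚ × N × ℚ) :
    (p • x - q • y).1 = p * x.1 - q * y.1 := by
  simp [Prod.smul_fst, Prod.fst_sub, smul_eq_mul]

lemma zero_of_inv (u : ℚ × N × ℚ)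
    (h1 : u.1 = 0) (h2 : dInv B H β u = 0) (h3 : DInv B H β u = 0)
    (h4 : aInv B β u = 0) : u = 0 := by
  obtain ⟨r, D, a⟩ := u
  have h1' : r = 0 := h1
  subst h1'
  have hr : rInv B ((0 : ℚ), D, a) = 0 := by simp [rInv, mpair, mrho]
  rw [DInv, hr, h2] at h3
  simp only [zero_smul, sub_zero] at h3
  have h3' : D = 0 := h3
  subst h3'
  simp only [aInv, mpair, mexp, map_zero, LinearMap.zero_apply, zero_mul, mul_zero,
    zero_sub, sub_zero, neg_neg, mul_one, neg_zero] at h4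
  have h4' : a = 0 := by linarith [h4]
  simp [h4']

lemma Zst_re (hB : ∀ a b : N, B a b = B b a) (u : ℚ × N × ℚ) :
    (Zst B H β t u).re = ((-(aInv B β u) + t^2 * B H H / 2 * u.1 : ℚ) : ℝ) := by
  simp only [Zst, Complex.sub_re, Complex.add_re, Complex.mul_re, Complex.I_re,
    Complex.I_im, Complex.ratCast_re, Complex.ratCast_im, mul_zero, mul_one, zero_mul,
    sub_zero, zero_sub]
  push_cast
  have h1 : mpair B (mexp B β) u = -(aInv B β u) := by
    simp only [aInv, mpair, mexp, mul_one, neg_sub, neg_neg]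
    rw [hB β u.2.1]; ring
  have h2 : mpair B mrho u = -u.1 := by simp [mpair, mrho]
  have h3 : B (t • H) (t • H) = t^2 * B H H := by
    simp only [map_smul, LinearMap.smul_apply, smul_eq_mul]; ring
  rw [h1, h2, h3]
  push_cast
  ring

lemma Zst_im (hB : ∀ a b : N, B a b = B b a) (hH : B H H ≠ 0) (u : ℚ × N × ℚ) :
    (Zst B H β t u).im = ((t * B H H * dInv B H β u : ℚ) : ℝ) := by
  simp only [Zst, Complex.sub_im, Complex.add_im, Complex.mul_im, Complex.I_re,
    Complex.I_im, Complex.ratCast_re, Complex.ratCast_im, mul_zero, mul_one, zero_mul,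
    sub_zero, zero_sub, add_zero, zero_add, neg_zero]
  push_cast
  have h1 : mpair B (0, t • H, B (t • H) β) u = t * B H H * dInv B H β u := by
    simp only [mpair, dInv, map_smul, LinearMap.smul_apply, smul_eq_mul, zero_mul,
      mul_zero, sub_zero]
    rw [hB H u.2.1]
    field_simp
  rw [h1]
  push_cast
  ring

end auxWall
/-- Wall criterion, direction (I): on an abelian surface, if `⟨v²⟩ > 0`,
`d_β(v) ≥ 0`, `v₁ ∉ ℚv`, and `Z(v₁), Z(v − v₁)` are `ℝ`-linearly dependent
with both values in `ℍ ∪ ℝ_{<0}`, then `⟨v₁²⟩ ≥ 0` and `⟨v₂²⟩ ≥ 0` imply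
`⟨v₁,v₂⟩ > 0`, where `v₂ = v − v₁`. -/
theorem wall_criterion_necessity (B : N →ₗ[ℚ] N →ₗ[ℚ] ℚ)
    (hB : ∀ a b : N, B a b = B b a) (H : N) (hH : 0 < B H H)
    (hneg : ∀ x : N, B x H = 0 → x ≠ 0 → B x x < 0)
    (β : N) (t : ℚ) (ht : 0 < t)
    (v v₁ : ℚ × N × ℚ)
    (hv2 : 0 < mpair B v v) (hdv : 0 ≤ dInv B H β v)
    (hnotQ : ∀ q0 : ℚ, v₁ ≠ q0 • v)
    (hdep : ¬ LinearIndependent ℝ ![Zst B H β t v₁, Zst B H β t (v - v₁)])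
    (hH1 : 0 < (Zst B H β t v₁).im ∨
      ((Zst B H β t v₁).im = 0 ∧ (Zst B H β t v₁).re < 0))
    (hH2 : 0 < (Zst B H β t (v - v₁)).im ∨
      ((Zst B H β t (v - v₁)).im = 0 ∧ (Zst B H β t (v - v₁)).re < 0)) :
    0 ≤ mpair B v₁ v₁ → 0 ≤ mpair B (v - v₁) (v - v₁) →
      0 < mpair B v₁ (v - v₁) := by
  intro hS1 hS2
  have hHne : B H H ≠ 0 := ne_of_gt hH
  set v₂ : ℚ × N × ℚ := v - v₁ with hv₂def
  have hsumv : v₁ + v₂ = v := by rw [hv₂def]; abel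
  have hvsum : mpair B v v = mpair B v₁ v₁ + 2*mpair B v₁ v₂ + mpair B v₂ v₂ := by
    have h := mpair_add_add B hB v₁ v₂
    rw [hsumv] at h
    exact h
  have hle : ∀ x : N, B x H = 0 → B x x ≤ 0 := by
    intro x hx
    by_cases h : x = 0
    · simp [h]
    · exact le_of_lt (hneg x hx h)
  have hZ1ne : Zst B H β t v₁ ≠ 0 := by
    intro hz
    rcases hH1 with h | ⟨h, h'⟩
    · rw [hz] at h; simp at h
    · rw [hz] at h'; simp at h'
  have hZ2ne : Zst B H β t v₂ ≠ 0 := by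
    intro hz
    rcases hH2 with h | ⟨h, h'⟩
    · rw [hz] at h; simp at h
    · rw [hz] at h'; simp at h'
  rw [linearIndependent_fin2] at hdep
  push_neg at hdep
  simp only [Matrix.cons_val_zero, Matrix.cons_val_one, Matrix.head_cons] at hdep
  obtain ⟨c, hc⟩ := hdep hZ2ne
  have hcre : (Zst B H β t v₁).re = c * (Zst B H β t v₂).re := by
    rw [← hc, Complex.real_smul]
    simp [Complex.mul_re]
  have hcim : (Zst B H β t v₁).im = c * (Zst B H β t v₂).im := by
    rw [← hc, Complex.real_smul]
    simp [Complex.mul_im]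
  have him1 := Zst_im B H β t hB hHne v₁
  have him2 := Zst_im B H β t hB hHne v₂
  have hre1 := Zst_re B H β t hB v₁
  have hre2 := Zst_re B H β t hB v₂
  have htB : 0 < t * B H H := mul_pos ht hH
  have hd1nn : 0 ≤ dInv B H β v₁ := by
    have h0 : 0 ≤ (Zst B H β t v₁).im := by rcases hH1 with h|⟨h,_⟩ <;> linarith
    rw [him1] at h0
    have h0' : (0:ℚ) ≤ t * B H H * dInv B H β v₁ := by exact_mod_cast h0
    by_contra hx
    push_neg at hx
    linarith [mul_pos htB (neg_pos.mpr hx)]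
  have hd2nn : 0 ≤ dInv B H β v₂ := by
    have h0 : 0 ≤ (Zst B H β t v₂).im := by rcases hH2 with h|⟨h,_⟩ <;> linarith
    rw [him2] at h0
    have h0' : (0:ℚ) ≤ t * B H H * dInv B H β v₂ := by exact_mod_cast h0
    by_contra hx
    push_neg at hx
    linarith [mul_pos htB (neg_pos.mpr hx)]
  have hkpos : (0:ℚ) < t^2 * B H H / 2 := by positivity
  by_cases hd1z : dInv B H β v₁ = 0
  · -- Case (a): both imaginary parts vanish
    have hZ1im : (Zst B H β t v₁).im = 0 := by rw [him1, hd1z]; push_cast; ring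
    have hd2z : dInv B H β v₂ = 0 := by
      by_contra hne
      have hd2pos : 0 < dInv B H β v₂ := lt_of_le_of_ne hd2nn (Ne.symm hne)
      have hZ2im : (0:ℝ) < (Zst B H β t v₂).im := by
        rw [him2]
        exact_mod_cast mul_pos htB hd2pos
      have hc0 : c = 0 := by
        by_contra hcne
        have h := hcim
        rw [hZ1im] at h
        rcases mul_eq_zero.mp h.symm with h'|h'
        · exact hcne h'
        · linarith
      apply hZ1ne
      rw [← hc, hc0]
      simp
    have hZ2im : (Zst B H β t v₂).im = 0 := by rw [him2, hd2z]; push_cast; ring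
    have hp1 : -(aInv B β v₁) + t^2*B H H/2*v₁.1 < 0 := by
      rcases hH1 with h|⟨_,h'⟩
      · rw [hZ1im] at h; exact absurd h (lt_irrefl 0)
      · rw [hre1] at h'; exact_mod_cast h'
    have hp2 : -(aInv B β v₂) + t^2*B H H/2*v₂.1 < 0 := by
      rcases hH2 with h|⟨_,h'⟩
      · rw [hZ2im] at h; exact absurd h (lt_irrefl 0)
      · rw [hre2] at h'; exact_mod_cast h'
    have hf1 := mpair_formula B H β hB hHne v₁ v₁
    have hf2 := mpair_formula B H β hB hHne v₂ v₂
    have hf12 := mpair_formula B H β hB hHne v₁ v₂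
    rw [hd1z] at hf1 hf12
    rw [hd2z] at hf2 hf12
    have hQ1 := hle _ (DInv_orth B H β hB hHne v₁)
    have hQ2 := hle _ (DInv_orth B H β hB hHne v₂)
    have hr1 : v₁.1 ≤ 0 := by
      by_contra h
      push_neg at h
      have ha1 : 0 < aInv B β v₁ := by linarith [mul_pos hkpos h]
      linarith [mul_pos h ha1, hf1, hS1, hQ1]
    have hr2 : v₂.1 ≤ 0 := by
      by_contra h
      push_neg at h
      have ha2 : 0 < aInv B β v₂ := by linarith [mul_pos hkpos h]
      linarith [mul_pos h ha2, hf2, hS2, hQ2]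
    rcases eq_or_lt_of_le hr1 with hr1z | hr1n
    · -- r₁ = 0
      have hr1z' : v₁.1 = 0 := hr1z
      rw [hr1z'] at hp1 hf1 hf12
      have hQ1z : B (DInv B H β v₁) (DInv B H β v₁) = 0 := by
        have he : mpair B v₁ v₁ = B (DInv B H β v₁) (DInv B H β v₁) := by
          rw [hf1]; ring
        linarith
      have hD1 : DInv B H β v₁ = 0 := by
        by_contra h
        exact absurd hQ1z (ne_of_lt (hneg _ (DInv_orth B H β hB hHne v₁) h))
      have hQ12 : B (DInv B H β v₁) (DInv B H β v₂) = 0 := by rw [hD1]; simp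
      have ha1pos : 0 < aInv B β v₁ := by linarith [hp1]
      rcases eq_or_lt_of_le hr2 with hr2z | hr2n
      · -- r₂ = 0 too: contradiction with ⟨v²⟩ > 0
        exfalso
        have hr2z' : v₂.1 = 0 := hr2z
        rw [hr2z'] at hf2 hf12
        have he2 : mpair B v₂ v₂ = B (DInv B H β v₂) (DInv B H β v₂) := by
          rw [hf2]; ring
        have he12 : mpair B v₁ v₂ = B (DInv B H β v₁) (DInv B H β v₂) := by
          rw [hf12]; ring
        have he1 : mpair B v₁ v₁ = B (DInv B H β v₁) (DInv B H β v₁) := by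
          rw [hf1]; ring
        linarith
      · -- r₂ < 0
        rw [hf12, hQ12]
        linarith [mul_pos (neg_pos.mpr hr2n) ha1pos]
    · rcases eq_or_lt_of_le hr2 with hr2z | hr2n
      · -- r₂ = 0, r₁ < 0
        have hr2z' : v₂.1 = 0 := hr2z
        rw [hr2z'] at hp2 hf2 hf12
        have hQ2z : B (DInv B H β v₂) (DInv B H β v₂) = 0 := by
          have he : mpair B v₂ v₂ = B (DInv B H β v₂) (DInv B H β v₂) := by
            rw [hf2]; ring
          linarith
        have hD2 : DInv B H β v₂ = 0 := by
          by_contra h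
          exact absurd hQ2z (ne_of_lt (hneg _ (DInv_orth B H β hB hHne v₂) h))
        have hQ12 : B (DInv B H β v₁) (DInv B H β v₂) = 0 := by rw [hD2]; simp
        have ha2pos : 0 < aInv B β v₂ := by linarith [hp2]
        rw [hf12, hQ12]
        linarith [mul_pos (neg_pos.mpr hr1n) ha2pos]
      · -- r₁ < 0, r₂ < 0
        set w : ℚ × N × ℚ := v₂.1 • v₁ - v₁.1 • v₂ with hwdef
        have hfw := mpair_formula B H β hB hHne w w
        have hw1 : w.1 = 0 := by rw [hwdef, fst_sub_smul]; ring
        have hdw : dInv B H β w = 0 := by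
          rw [hwdef, dInv_sub_smul, hd1z, hd2z]; ring
        have hQw := hle _ (DInv_orth B H β hB hHne w)
        rw [hw1, hdw] at hfw
        have hSw : mpair B w w ≤ 0 := by rw [hfw]; linarith [hQw]
        have hexp := mpair_sub_sub B hB v₂.1 v₁.1 v₁ v₂
        rw [← hwdef] at hexp
        by_contra hcon
        push_neg at hcon
        have hrr : 0 < v₁.1 * v₂.1 := mul_pos_of_neg_of_neg hr1n hr2n
        have h1 : v₂.1^2 * mpair B v₁ v₁ + v₁.1^2 * mpair B v₂ v₂
            ≤ 2*(v₂.1*v₁.1)*mpair B v₁ v₂ := by linarith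
        have h2 : 2*(v₂.1*v₁.1) * mpair B v₁ v₂ ≤ 0 := by
          linarith [mul_nonneg hrr.le (neg_nonneg.mpr hcon)]
        have h3 : v₂.1^2 * mpair B v₁ v₁ ≤ 0 := by
          linarith [h1, h2, mul_nonneg (sq_nonneg v₁.1) hS2]
        have h4 : v₁.1^2 * mpair B v₂ v₂ ≤ 0 := by
          linarith [h1, h2, mul_nonneg (sq_nonneg v₂.1) hS1]
        have hS1le : mpair B v₁ v₁ ≤ 0 := by
          by_contra hx
          push_neg at hx
          linarith [h3, mul_pos (mul_pos_of_neg_of_neg hr2n hr2n) hx]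
        have hS2le : mpair B v₂ v₂ ≤ 0 := by
          by_contra hx
          push_neg at hx
          linarith [h4, mul_pos (mul_pos_of_neg_of_neg hr1n hr1n) hx]
        have hS1z : mpair B v₁ v₁ = 0 := le_antisymm hS1le hS1
        have hS2z : mpair B v₂ v₂ = 0 := le_antisymm hS2le hS2
        linarith
  · -- Case (b): both imaginary parts positive
    have hd1pos : 0 < dInv B H β v₁ := lt_of_le_of_ne hd1nn (Ne.symm hd1z)
    have hd2pos : 0 < dInv B H β v₂ := by
      rcases eq_or_lt_of_le hd2nn with h | h
      · exfalso
        have hZ2im : (Zst B H β t v₂).im = 0 := by rw [him2, ← h]; push_cast; ring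
        have hZ1im : (Zst B H β t v₁).im = 0 := by rw [hcim, hZ2im]; ring
        rw [him1] at hZ1im
        have hq : t * B H H * dInv B H β v₁ = 0 := by exact_mod_cast hZ1im
        rcases mul_eq_zero.mp hq with h'|h'
        · exact absurd h' (ne_of_gt htB)
        · exact hd1z h'
      · exact h
    have htBne : t * B H H ≠ 0 := ne_of_gt htB
    have hcross : (-(aInv B β v₁) + t^2*B H H/2*v₁.1) * dInv B H β v₂
        = (-(aInv B β v₂) + t^2*B H H/2*v₂.1) * dInv B H β v₁ := by
      have hr : (Zst B H β t v₁).re * (Zst B H β t v₂).im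
          = (Zst B H β t v₂).re * (Zst B H β t v₁).im := by
        rw [hcre, hcim]; ring
      rw [hre1, hre2, him1, him2] at hr
      have hr' : (-(aInv B β v₁) + t^2*B H H/2*v₁.1) * (t*B H H*dInv B H β v₂)
          = (-(aInv B β v₂) + t^2*B H H/2*v₂.1) * (t*B H H*dInv B H β v₁) := by
        exact_mod_cast hr
      apply mul_left_cancel₀ htBne
      linear_combination hr'
    set w : ℚ × N × ℚ := dInv B H β v₂ • v₁ - dInv B H β v₁ • v₂ with hwdef
    have hw1 : w.1 = dInv B H β v₂ * v₁.1 - dInv B H β v₁ * v₂.1 := by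
      rw [hwdef, fst_sub_smul]
    have hdw : dInv B H β w = 0 := by
      rw [hwdef, dInv_sub_smul]; ring
    have haw : aInv B β w = t^2*B H H/2 * w.1 := by
      rw [hwdef, aInv_sub_smul, hw1]
      linear_combination -hcross
    have hwne : w ≠ 0 := by
      intro h0
      rw [hwdef] at h0
      have h' : dInv B H β v₂ • v₁ = dInv B H β v₁ • v₂ := sub_eq_zero.mp h0
      have hsum2 : (dInv B H β v₂ + dInv B H β v₁) • v₁ = dInv B H β v₁ • v := by
        rw [add_smul, h', hv₂def, smul_sub]; abel
      have hne : dInv B H β v₂ + dInv B H β v₁ ≠ 0 := by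
        apply ne_of_gt; linarith
      have hfin : v₁ = ((dInv B H β v₂ + dInv B H β v₁)⁻¹ * dInv B H β v₁) • v := by
        rw [mul_smul, ← hsum2, inv_smul_smul₀ hne]
      exact hnotQ _ hfin
    have hfw := mpair_formula B H β hB hHne w w
    rw [hdw, haw] at hfw
    have hQw := hle _ (DInv_orth B H β hB hHne w)
    have hSwneg : mpair B w w < 0 := by
      rcases eq_or_lt_of_le hQw with hq | hq
      · have hDw : DInv B H β w = 0 := by
          by_contra h
          exact absurd hq (ne_of_lt (hneg _ (DInv_orth B H β hB hHne w) h))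
        have hw1ne : w.1 ≠ 0 := by
          intro h
          exact hwne (zero_of_inv B H β w h hdw hDw (by rw [haw, h]; ring))
        have hsq : 0 < w.1 * w.1 := by
          rcases hw1ne.lt_or_gt with h|h
          · exact mul_pos_of_neg_of_neg h h
          · exact mul_pos h h
        rw [hfw, hq]
        linarith [mul_pos hkpos hsq]
      · rw [hfw]
        linarith [hq, mul_nonneg hkpos.le (mul_self_nonneg w.1)]
    have hexp := mpair_sub_sub B hB (dInv B H β v₂) (dInv B H β v₁) v₁ v₂
    rw [← hwdef] at hexp
    by_contra hcon
    push_neg at hcon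
    linarith [hexp, hSwneg, mul_nonneg (mul_nonneg hd1pos.le hd2pos.le) (neg_nonneg.mpr hcon),
      mul_nonneg (sq_nonneg (dInv B H β v₂)) hS1,
      mul_nonneg (sq_nonneg (dInv B H β v₁)) hS2]
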